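/- Let Ỹ be a finite set of size M, u the uniform distribution on Ỹ, e_ỹ the point mass at ỹ ∈ Ỹ, and a any distribution on Ỹ. Fix 0 ≤ η' ≤ η < 1 and set p̃ = (1−η')e_ỹ + η'u, p = (1−η)e_ỹ + ηu, p̂ = (1−η)a + ηu. Then Σ_{ỹ'} p̃[ỹ'] √(p̂[ỹ']/p[ỹ']) ≤ Σ_{ỹ'} √(p[ỹ'] p̂[ỹ']). -/

import Mathlib

/-- key likelihood-ratio inequality for the randomized response kernel. -/
theorem stmt_12 {M : ℕ} (y : Fin M) (a : Fin M → ℝ)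
    (ha0 : ∀ i, 0 ≤ a i) (ha1 : ∑ i, a i = 1)
    (η' η : ℝ) (h0 : 0 ≤ η') (h1 : η' ≤ η) (h2 : η < 1) (h3 : 0 < η)
    (pt p ph : Fin M → ℝ)
    (hpt : ∀ i, pt i = (1 - η') * (if i = y then 1 else 0) + η' * (1 / M))
    (hp : ∀ i, p i = (1 - η) * (if i = y then 1 else 0) + η * (1 / M))
    (hph : ∀ i, ph i = (1 - η) * a i + η * (1 / M)) :
    ∑ i, pt i * Real.sqrt (ph i / p i) ≤ ∑ i, Real.sqrt (p i * ph i) := by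
  have hM : 0 < (M : ℝ) := by
    exact_mod_cast Nat.pos_of_ne_zero (fun h => by subst h; exact y.elim0)
  have hη1 : 0 ≤ 1 - η := by linarith
  have hp_pos : ∀ i, 0 < p i := by
    intro i
    rw [hp i]
    have : 0 < η * (1 / M) := by positivity
    split_ifs with h
    · nlinarith
    · simpa using this
  have hph_nonneg : ∀ i, 0 ≤ ph i := by
    intro i; rw [hph i]
    have := ha0 i; positivity
  set s : Fin M → ℝ := fun i => Real.sqrt (ph i / p i) with hs
  have hs_nonneg : ∀ i, 0 ≤ s i := fun i => Real.sqrt_nonneg _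
  -- a y ≤ 1
  have hay : a y ≤ 1 := by
    rw [← ha1]
    exact Finset.single_le_sum (fun i _ => ha0 i) (Finset.mem_univ y)
  -- s y ≤ s i for all i
  have hkey : ∀ i, s y ≤ s i := by
    intro i
    by_cases h : i = y
    · subst h; exact le_refl _
    · apply Real.sqrt_le_sqrt
      have h1' : ph y / p y ≤ 1 := by
        rw [div_le_one (hp_pos y), hph y, hp y, if_pos rfl]
        nlinarith
      have h2' : 1 ≤ ph i / p i := by
        rw [le_div_iff₀ (hp_pos i), one_mul, hph i, hp i]
        simp only [if_neg h]
        have := ha0 i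
        nlinarith
      linarith
  -- RHS equals ∑ p i * s i
  have hrhs : ∀ i, Real.sqrt (p i * ph i) = p i * s i := by
    intro i
    have hpi := hp_pos i
    have : p i * ph i = p i ^ 2 * (ph i / p i) := by
      field_simp
    rw [this, Real.sqrt_mul (sq_nonneg _), Real.sqrt_sq hpi.le, hs]
  simp only [hrhs]
  -- reduce to ∑ (p i - pt i) * s i ≥ 0
  rw [← sub_nonneg, ← Finset.sum_sub_distrib]
  have hdiff : ∀ i, p i * s i - pt i * s i =
      (η - η') * ((1 / M) * s i) - (η - η') * (if i = y then 1 else 0) * s i := by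
    intro i
    rw [hp i, hpt i]
    ring
  change 0 ≤ ∑ x, (p x * s x - pt x * s x)
  simp only [hdiff]
  rw [Finset.sum_sub_distrib, ← Finset.mul_sum, ← Finset.mul_sum, sub_nonneg]
  have hsum_ite : ∑ i, (η - η') * (if i = y then 1 else 0) * s i = (η - η') * s y := by
    have h' : ∀ i : Fin M, (η - η') * (if i = y then 1 else 0) * s i
        = if i = y then (η - η') * s i else 0 := by
      intro i; split_ifs <;> ring
    simp only [h']
    rw [Finset.sum_ite_eq' Finset.univ y (fun i => (η - η') * s i)]
    simp
  rw [hsum_ite, Finset.mul_sum]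
  have hbound : s y ≤ ∑ i, (1 / M) * s i := by
    have hcard : (M : ℝ) * s y ≤ ∑ i, s i := by
      have := Finset.card_nsmul_le_sum Finset.univ s (s y) (fun i _ => hkey i)
      simpa [nsmul_eq_mul, mul_comm] using this
    rw [← Finset.mul_sum]
    rw [← mul_le_mul_iff_of_pos_left hM]
    calc (M : ℝ) * s y ≤ ∑ i, s i := hcard
      _ = (M : ℝ) * (1 / M * ∑ i, s i) := by field_simp
  have : 0 ≤ η - η' := by linarith
  exact mul_le_mul_of_nonneg_left hbound this
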